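/- Let ‖·‖ be an arbitrary monotone norm on ℝ^K, let p̄ > 0, let C := {p ∈ ℝ_{≥0}^K : ‖p‖ ≤ p̄}, and let utility functions u_1,…,u_K satisfy Assumption 1. Then for any p* ∈ C, the utilities (u_1(p*),…,u_K(p*)) are on the weak Pareto boundary under the constraint C if and only if ‖p*‖ = p̄. -/

import Mathlib

open Filter Topology MeasureTheory

/-- The nonnegative orthant of `ℝ^K`. -/
def NonnegOrth (K : ℕ) : Set (Fin K → ℝ) := {x | ∀ i, 0 ≤ x i}

/-- A standard interference function: positive, monotone and scalable on the
nonnegative orthant. -/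
def StdIF {K : ℕ} (f : (Fin K → ℝ) → ℝ) : Prop :=
  (∀ x ∈ NonnegOrth K, 0 < f x) ∧
  (∀ x ∈ NonnegOrth K, ∀ y ∈ NonnegOrth K, (∀ i, y i ≤ x i) → f y ≤ f x) ∧
  (∀ x ∈ NonnegOrth K, ∀ α : ℝ, 1 < α → f (α • x) < α * f x)

/-- Assumption 1: each utility `u k` equals `p k / f k p` on the nonnegative orthant,
for a continuous standard interference function `f k`. -/
def Assumption1 {K : ℕ} (u f : Fin K → (Fin K → ℝ) → ℝ) : Prop :=
  ∀ k, StdIF (f k) ∧ ContinuousOn (f k) (NonnegOrth K) ∧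
    ∀ p ∈ NonnegOrth K, u k p = p k / f k p

/-- A monotone norm on `ℝ^K`. -/
def IsMonoNorm {K : ℕ} (N : (Fin K → ℝ) → ℝ) : Prop :=
  (∀ x, 0 ≤ N x) ∧ (∀ x, N x = 0 ↔ x = 0) ∧
  (∀ (a : ℝ) (x : Fin K → ℝ), N (a • x) = |a| * N x) ∧
  (∀ x y, N (x + y) ≤ N x + N y) ∧
  (∀ x y : Fin K → ℝ, x ∈ NonnegOrth K → (∀ i, x i ≤ y i) → N x ≤ N y)

/-- The utilities of `p` are on the weak Pareto boundary under the constraint `C`. -/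
def WeakPareto {K : ℕ} (u : Fin K → (Fin K → ℝ) → ℝ)
    (C : Set (Fin K → ℝ)) (p : Fin K → ℝ) : Prop :=
  ¬ ∃ p' ∈ C, ∀ k, u k p < u k p'

/-- Feasibility for the weighted max-min problem (1). -/
def Feas1 {K : ℕ} (N : (Fin K → ℝ) → ℝ) (pbar : ℝ) (p : Fin K → ℝ) : Prop :=
  p ∈ NonnegOrth K ∧ N p ≤ pbar

/-- Optimality for the weighted max-min problem (1):
maximize `min_k (ω k)⁻¹ * u k p` subject to `‖p‖ ≤ pbar`. -/
def Sol1 {K : ℕ} (N : (Fin K → ℝ) → ℝ) (pbar : ℝ) (ω : Fin K → ℝ)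
    (u : Fin K → (Fin K → ℝ) → ℝ) (p : Fin K → ℝ) : Prop :=
  Feas1 N pbar p ∧ ∀ q, Feas1 N pbar q →
    (⨅ k, (ω k)⁻¹ * u k q) ≤ ⨅ k, (ω k)⁻¹ * u k p

/-- Feasibility for the epigraph-form problem (2). -/
def Feas2 {K : ℕ} (N : (Fin K → ℝ) → ℝ) (pbar : ℝ) (ω : Fin K → ℝ)
    (u : Fin K → (Fin K → ℝ) → ℝ) (c : ℝ) (p : Fin K → ℝ) : Prop :=
  0 ≤ c ∧ p ∈ NonnegOrth K ∧ N p ≤ pbar ∧ ∀ k, c * ω k ≤ u k p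

/-- Optimality for the epigraph-form problem (2): maximize `c` subject to
`‖p‖ ≤ pbar` and `u k p ≥ c * ω k` for all `k`. -/
def Sol2 {K : ℕ} (N : (Fin K → ℝ) → ℝ) (pbar : ℝ) (ω : Fin K → ℝ)
    (u : Fin K → (Fin K → ℝ) → ℝ) (c : ℝ) (p : Fin K → ℝ) : Prop :=
  Feas2 N pbar ω u c p ∧ ∀ c' p', Feas2 N pbar ω u c' p' → c' ≤ c

/-- Feasibility for the fixed-point-form problem (4). -/
def Feas4 {K : ℕ} (N : (Fin K → ℝ) → ℝ) (pbar : ℝ)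
    (T : (Fin K → ℝ) → Fin K → ℝ) (c : ℝ) (p : Fin K → ℝ) : Prop :=
  0 ≤ c ∧ p ∈ NonnegOrth K ∧ N p ≤ pbar ∧ p = c • T p

/-- Optimality for the fixed-point-form problem (4): maximize `c` subject to
`‖p‖ ≤ pbar` and `p = c • T p`. -/
def Sol4 {K : ℕ} (N : (Fin K → ℝ) → ℝ) (pbar : ℝ)
    (T : (Fin K → ℝ) → Fin K → ℝ) (c : ℝ) (p : Fin K → ℝ) : Prop :=
  Feas4 N pbar T c p ∧ ∀ c' p', Feas4 N pbar T c' p' → c' ≤ c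

/-- Proposition 4: for `p* ∈ C = {p ≥ 0 : ‖p‖ ≤ pbar}`, the utilities of `p*` are on
the weak Pareto boundary under the constraint `C` if and only if `‖p*‖ = pbar`. -/
theorem stmt10 {K : ℕ} (N : (Fin K → ℝ) → ℝ) (hN : IsMonoNorm N)
    (pbar : ℝ) (hpbar : 0 < pbar)
    (u f : Fin K → (Fin K → ℝ) → ℝ) (hA : Assumption1 u f)
    (pstar : Fin K → ℝ) (hpstar : pstar ∈ NonnegOrth K) (hfeas : N pstar ≤ pbar) :
    WeakPareto u {p | p ∈ NonnegOrth K ∧ N p ≤ pbar} pstar ↔ N pstar = pbar := by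
  obtain ⟨hN0, hNz, hNh, hNtri, hNmono⟩ := hN
  constructor
  · -- Pareto → full norm
    intro hWP
    by_contra hne
    have hlt : N pstar < pbar := lt_of_le_of_ne hfeas hne
    apply hWP
    -- choose a scaling factor α > 1 with α * N pstar < pbar
    set s : ℝ := max (N pstar) (pbar / 2) with hs_def
    have hs_pos : 0 < s := lt_of_lt_of_le (by linarith) (le_max_right _ _)
    have hs_lt : s < pbar := max_lt hlt (by linarith)
    set α : ℝ := (s + pbar) / (2 * s) with hα_def
    have hα1 : 1 < α := by
      rw [hα_def, lt_div_iff₀ (by linarith)]; linarith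
    have hαs : α * s = (s + pbar) / 2 := by
      rw [hα_def, div_mul_eq_mul_div, div_eq_div_iff (mul_pos two_pos hs_pos).ne' two_ne_zero]; ring
    have hαNp : α * N pstar < pbar := by
      have h1 : α * N pstar ≤ α * s :=
        mul_le_mul_of_nonneg_left (le_max_left _ _) (by linarith)
      rw [hαs] at h1; linarith
    set q : Fin K → ℝ := α • pstar with hq_def
    have hqorth : q ∈ NonnegOrth K := fun i => by
      have := hpstar i
      simp only [hq_def, Pi.smul_apply, smul_eq_mul]
      positivity
    have hNq : N q = α * N pstar := by
      rw [hq_def, hNh, abs_of_pos (by linarith)]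
    set one : Fin K → ℝ := fun _ => (1 : ℝ) with hone_def
    -- eventually (in ε ↘ 0) all the required strict inequalities hold
    have hev1 : ∀ᶠ ε in 𝓝[≥] (0:ℝ), ∀ k, f k (q + ε • one) < α * f k pstar := by
      rw [Filter.eventually_all]
      intro k
      obtain ⟨⟨hfpos, hfmono, hfscale⟩, hfcont, hu⟩ := hA k
      have hmap : Set.MapsTo (fun ε : ℝ => q + ε • one) (Set.Ici (0:ℝ))
          (NonnegOrth K) := by
        intro ε hε i
        simp only [Pi.add_apply, Pi.smul_apply, smul_eq_mul, hone_def]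
        have := hqorth i
        have : (0:ℝ) ≤ ε := hε
        have := hqorth i
        nlinarith [hqorth i]
      have hφ : ContinuousWithinAt (fun ε : ℝ => q + ε • one) (Set.Ici (0:ℝ)) 0 :=
        (continuous_const.add (continuous_id.smul continuous_const)).continuousWithinAt
      have hq0 : q + (0:ℝ) • one = q := by simp
      have hcomp : ContinuousWithinAt (fun ε : ℝ => f k (q + ε • one))
          (Set.Ici (0:ℝ)) 0 :=
        ContinuousWithinAt.comp
          (show ContinuousWithinAt (f k) (NonnegOrth K) (q + (0:ℝ) • one) by
            rw [hq0]; exact hfcont q hqorth) hφ hmap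
      have hstrict : f k (q + (0:ℝ) • one) < α * f k pstar := by
        simpa [hq_def] using hfscale pstar hpstar α hα1
      exact hcomp.eventually_lt_const (by simpa using hstrict)
    have hev2 : ∀ᶠ ε in 𝓝[≥] (0:ℝ), N q + ε * N one < pbar := by
      have hc : ContinuousWithinAt (fun ε : ℝ => N q + ε * N one)
          (Set.Ici (0:ℝ)) 0 :=
        (continuous_const.add (continuous_id.mul continuous_const)).continuousWithinAt
      have : N q + (0:ℝ) * N one < pbar := by rw [hNq]; linarith
      exact hc.eventually_lt_const (by simpa using this)
    have hev : ∀ᶠ ε in 𝓝[>] (0:ℝ),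
        (∀ k, f k (q + ε • one) < α * f k pstar) ∧ N q + ε * N one < pbar ∧ 0 < ε := by
      have h12 := (hev1.and hev2).filter_mono (nhdsWithin_mono 0 Set.Ioi_subset_Ici_self)
      filter_upwards [h12, self_mem_nhdsWithin] with ε h hε
      exact ⟨h.1, h.2, hε⟩
    obtain ⟨ε, hfε, hNε, hεpos⟩ := hev.exists
    refine ⟨q + ε • one, ⟨?_, ?_⟩, ?_⟩
    · intro i
      simp only [Pi.add_apply, Pi.smul_apply, smul_eq_mul, hone_def]
      nlinarith [hqorth i]
    · have htri := hNtri q (ε • one)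
      have hh : N (ε • one) = ε * N one := by
        rw [hNh, abs_of_pos hεpos]
      linarith
    · intro k
      obtain ⟨⟨hfpos, hfmono, hfscale⟩, hfcont, hu⟩ := hA k
      have hp'orth : q + ε • one ∈ NonnegOrth K := fun i => by
        simp only [Pi.add_apply, Pi.smul_apply, smul_eq_mul, hone_def]
        nlinarith [hqorth i]
      rw [hu pstar hpstar, hu _ hp'orth]
      have hfp : 0 < f k pstar := hfpos pstar hpstar
      have hfp' : 0 < f k (q + ε • one) := hfpos _ hp'orth
      have hflt : f k (q + ε • one) < α * f k pstar := hfε k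
      have hval : (q + ε • one) k = α * pstar k + ε := by
        simp [hq_def, hone_def]
      rw [hval, div_lt_div_iff₀ hfp hfp']
      have hpk : 0 ≤ pstar k := hpstar k
      nlinarith [mul_le_mul_of_nonneg_left hflt.le hpk]
  · -- full norm → Pareto
    intro hNp
    rintro ⟨p', ⟨hp'orth, hp'N⟩, hdom⟩
    -- every coordinate of p' is positive
    have hp'pos : ∀ k, 0 < p' k := by
      intro k
      obtain ⟨⟨hfpos, hfmono, hfscale⟩, hfcont, hu⟩ := hA k
      have h1 := hdom k
      rw [hu pstar hpstar, hu p' hp'orth] at h1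
      have hfp : 0 < f k pstar := hfpos pstar hpstar
      have hfp' : 0 < f k p' := hfpos p' hp'orth
      have h0 : (0:ℝ) ≤ pstar k / f k pstar := div_nonneg (hpstar k) hfp.le
      have : 0 < p' k / f k p' := lt_of_le_of_lt h0 h1
      by_contra hc
      push_neg at hc
      have : p' k / f k p' ≤ 0 := div_nonpos_of_nonpos_of_nonneg hc hfp'.le
      linarith
    -- pstar is nonzero
    have hpstar_ne : pstar ≠ 0 := by
      intro h0
      rw [h0, (hNz 0).2 rfl] at hNp
      linarith
    have hKpos : ∃ i, 0 < pstar i := by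
      by_contra hc
      push_neg at hc
      exact hpstar_ne (funext fun i => le_antisymm (hc i) (hpstar i))
    obtain ⟨i0, hi0⟩ := hKpos
    have : Nonempty (Fin K) := ⟨i0⟩
    obtain ⟨j, -, hj⟩ := Finset.exists_max_image Finset.univ
      (fun k => pstar k / p' k) ⟨i0, Finset.mem_univ i0⟩
    set μ : ℝ := pstar j / p' j with hμ_def
    have hμmax : ∀ k, pstar k / p' k ≤ μ := fun k => hj k (Finset.mem_univ k)
    have hμpos : 0 < μ :=
      lt_of_lt_of_le (div_pos hi0 (hp'pos i0)) (hμmax i0)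
    have hle : ∀ k, pstar k ≤ μ * p' k := fun k =>
      (div_le_iff₀ (hp'pos k)).1 (hμmax k)
    have hμp'orth : μ • p' ∈ NonnegOrth K := fun i => by
      simp only [Pi.smul_apply, smul_eq_mul]
      exact mul_nonneg hμpos.le (hp'pos i).le
    have hNμ : N (μ • p') = μ * N p' := by rw [hNh, abs_of_pos hμpos]
    have hNle : pbar ≤ μ * N p' := by
      rw [← hNp, ← hNμ]
      exact hNmono pstar (μ • p') hpstar (fun i => by
        simpa [Pi.smul_apply, smul_eq_mul] using hle i)
    have hμ1 : 1 ≤ μ := by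
      by_contra hc
      push_neg at hc
      have hNp'le : N p' ≤ pbar := hp'N
      have hNp'0 : 0 ≤ N p' := hN0 p'
      nlinarith
    obtain ⟨⟨hfpos, hfmono, hfscale⟩, hfcont, hu⟩ := hA j
    have hfp : 0 < f j pstar := hfpos pstar hpstar
    have hfp' : 0 < f j p' := hfpos p' hp'orth
    -- key: f j pstar ≤ μ * f j p'
    have hkey : f j pstar ≤ μ * f j p' := by
      have h1 : f j pstar ≤ f j (μ • p') :=
        hfmono (μ • p') hμp'orth pstar hpstar (fun i => by
          simpa [Pi.smul_apply, smul_eq_mul] using hle i)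
      rcases eq_or_lt_of_le hμ1 with heq | hlt
      · rw [← heq, one_smul] at h1
        rw [← heq]; linarith
      · have := hfscale p' hp'orth μ hlt
        linarith
    have hjval : pstar j = μ * p' j := by
      rw [hμ_def, div_mul_cancel₀]
      exact (hp'pos j).ne'
    have hcontra : u j p' ≤ u j pstar := by
      rw [hu pstar hpstar, hu p' hp'orth, hjval, div_le_div_iff₀ hfp' hfp]
      nlinarith [hp'pos j]
    exact absurd (hdom j) (not_lt.2 hcontra)
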